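/- Let p(x,y|k,l), p(x,k), p(y,l) be as in the variational bound: combining the per-(k,l) variational inequality log p(k)p(l) ≥ ∑_{x,y} p(x,y|k,l) log( p(x,k)p(y,l)/p(x,y|k,l) ) with weights p(k,l) and the factorization p(k,l|x,y) = p(k|x)p(l|y), one obtains ∑_{k,l} p(k,l) log( p(k,l)/(p(k)p(l)) ) ≤ ∑_{x,y,k,l} p(x,y,k,l) log( p(x,y)/(p(x)p(y)) ) = I(X;Y). -/

import Mathlib

open Finset

/-- Log-sum inequality. -/
lemma log_sum_ineq {ι : Type*} (s : Finset ι) (a b : ι → ℝ)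
    (ha : ∀ i ∈ s, 0 ≤ a i) (hb : ∀ i ∈ s, 0 ≤ b i)
    (hab : ∀ i ∈ s, b i = 0 → a i = 0) :
    (∑ i ∈ s, a i) * Real.log ((∑ i ∈ s, a i) / (∑ i ∈ s, b i))
      ≤ ∑ i ∈ s, a i * Real.log (a i / b i) := by
  set A := ∑ i ∈ s, a i with hA
  set B := ∑ i ∈ s, b i with hB
  by_cases hA0 : A = 0
  · have hz : ∀ i ∈ s, a i = 0 := by
      intro i hi
      exact (Finset.sum_eq_zero_iff_of_nonneg ha).mp hA0 i hi
    rw [hA0, zero_mul]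
    apply Finset.sum_nonneg
    intro i hi
    rw [hz i hi, zero_mul]
  · have hApos : 0 < A := lt_of_le_of_ne (Finset.sum_nonneg ha) (Ne.symm hA0)
    obtain ⟨i0, hi0, hai0⟩ := Finset.exists_ne_zero_of_sum_ne_zero hA0
    have hbi0 : 0 < b i0 := by
      rcases lt_or_eq_of_le (hb i0 hi0) with h | h
      · exact h
      · exact absurd (hab i0 hi0 h.symm) hai0
    have hBpos : 0 < B :=
      lt_of_lt_of_le hbi0 (Finset.single_le_sum hb hi0)
    have key : ∀ i ∈ s, a i - b i * (A / B) ≤ a i * Real.log (a i / b i) - a i * Real.log (A / B) := by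
      intro i hi
      rcases lt_or_eq_of_le (ha i hi) with hai | hai
      · have hbi : 0 < b i := by
          rcases lt_or_eq_of_le (hb i hi) with h | h
          · exact h
          · exact absurd (hab i hi h.symm) (ne_of_gt hai)
        have ht : 0 < b i * A / (a i * B) := by positivity
        have hlog := Real.log_le_sub_one_of_pos ht
        have heq : a i * Real.log (a i / b i) - a i * Real.log (A / B)
            = -(a i * Real.log (b i * A / (a i * B))) := by
          rw [Real.log_div (ne_of_gt (mul_pos hbi hApos)) (ne_of_gt (mul_pos hai hBpos)),
            Real.log_div (ne_of_gt hai) (ne_of_gt hbi),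
            Real.log_div (ne_of_gt hApos) (ne_of_gt hBpos),
            Real.log_mul (ne_of_gt hbi) (ne_of_gt hApos),
            Real.log_mul (ne_of_gt hai) (ne_of_gt hBpos)]
          ring
        rw [heq]
        have : a i * Real.log (b i * A / (a i * B)) ≤ a i * (b i * A / (a i * B) - 1) :=
          mul_le_mul_of_nonneg_left hlog (le_of_lt hai)
        have hcalc : a i * (b i * A / (a i * B) - 1) = b i * (A / B) - a i := by
          field_simp
        nlinarith [this]
      · rw [← hai]
        simp only [zero_mul, zero_sub, sub_zero]
        have h1 : 0 ≤ A / B := le_of_lt (div_pos hApos hBpos)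
        have : 0 ≤ b i * (A / B) := mul_nonneg (hb i hi) h1
        linarith
    have hsum_le : ∑ i ∈ s, (a i * Real.log (A / B) + (a i - b i * (A / B)))
        ≤ ∑ i ∈ s, a i * Real.log (a i / b i) := by
      apply Finset.sum_le_sum
      intro i hi
      linarith [key i hi]
    have hsum_eq : ∑ i ∈ s, (a i * Real.log (A / B) + (a i - b i * (A / B)))
        = A * Real.log (A / B) := by
      rw [Finset.sum_add_distrib, Finset.sum_sub_distrib, ← Finset.sum_mul, ← Finset.sum_mul,
        ← hA, ← hB]
      field_simp
      ring
    linarith [hsum_le, hsum_eq ▸ hsum_le]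

/-- Full chain of the Information Bound proof: under the conditional independence
`p(k,l|x,y) = p(k|x) p(l|y)`, we have
`I(K;L) ≤ ∑_{x,y,k,l} p(x,y,k,l) log (p(x,y)/(p(x)p(y)))`, and the latter equals `I(X;Y)`. -/
theorem stmt_11 {X Y K L : Type*} [Fintype X] [Fintype Y] [Fintype K] [Fintype L]
    (p : X → Y → K → L → ℝ)
    (hp : ∀ x y k l, 0 ≤ p x y k l)
    (hsum : ∑ x, ∑ y, ∑ k, ∑ l, p x y k l = 1)
    (pXY : X → Y → ℝ) (hpXY : ∀ x y, pXY x y = ∑ k, ∑ l, p x y k l)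
    (pX : X → ℝ) (hpX : ∀ x, pX x = ∑ y, pXY x y)
    (pY : Y → ℝ) (hpY : ∀ y, pY y = ∑ x, pXY x y)
    (pXK : X → K → ℝ) (hpXK : ∀ x k, pXK x k = ∑ y, ∑ l, p x y k l)
    (pYL : Y → L → ℝ) (hpYL : ∀ y l, pYL y l = ∑ x, ∑ k, p x y k l)
    (pKL : K → L → ℝ) (hpKL : ∀ k l, pKL k l = ∑ x, ∑ y, p x y k l)
    (pK : K → ℝ) (hpK : ∀ k, pK k = ∑ l, pKL k l)
    (pL : L → ℝ) (hpL : ∀ l, pL l = ∑ k, pKL k l)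
    (hfact : ∀ x y k l, 0 < pXY x y →
      p x y k l / pXY x y = (pXK x k / pX x) * (pYL y l / pY y)) :
    (∑ k, ∑ l, pKL k l * Real.log (pKL k l / (pK k * pL l)))
      ≤ ∑ x, ∑ y, ∑ k, ∑ l, p x y k l * Real.log (pXY x y / (pX x * pY y)) ∧
    (∑ x, ∑ y, ∑ k, ∑ l, p x y k l * Real.log (pXY x y / (pX x * pY y)))
      = ∑ x, ∑ y, pXY x y * Real.log (pXY x y / (pX x * pY y)) := by
  -- basic nonnegativity facts
  have hpXYnn : ∀ x y, 0 ≤ pXY x y := fun x y => by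
    rw [hpXY]; exact Finset.sum_nonneg fun k _ => Finset.sum_nonneg fun l _ => hp x y k l
  have hpXKnn : ∀ x k, 0 ≤ pXK x k := fun x k => by
    rw [hpXK]; exact Finset.sum_nonneg fun y _ => Finset.sum_nonneg fun l _ => hp x y k l
  have hpYLnn : ∀ y l, 0 ≤ pYL y l := fun y l => by
    rw [hpYL]; exact Finset.sum_nonneg fun x _ => Finset.sum_nonneg fun k _ => hp x y k l
  -- p ≤ various marginals
  have hp_le_pXY : ∀ x y k l, p x y k l ≤ pXY x y := fun x y k l => by
    rw [hpXY]
    calc p x y k l ≤ ∑ l, p x y k l :=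
          Finset.single_le_sum (fun l _ => hp x y k l) (Finset.mem_univ l)
      _ ≤ ∑ k, ∑ l, p x y k l :=
          Finset.single_le_sum (fun k _ => Finset.sum_nonneg fun l _ => hp x y k l)
            (Finset.mem_univ k)
  have hp_le_pXK : ∀ x y k l, p x y k l ≤ pXK x k := fun x y k l => by
    rw [hpXK]
    calc p x y k l ≤ ∑ l, p x y k l :=
          Finset.single_le_sum (fun l _ => hp x y k l) (Finset.mem_univ l)
      _ ≤ ∑ y, ∑ l, p x y k l :=
          Finset.single_le_sum (fun y _ => Finset.sum_nonneg fun l _ => hp x y k l)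
            (Finset.mem_univ y)
  have hp_le_pYL : ∀ x y k l, p x y k l ≤ pYL y l := fun x y k l => by
    rw [hpYL]
    calc p x y k l ≤ ∑ k, p x y k l :=
          Finset.single_le_sum (fun k _ => hp x y k l) (Finset.mem_univ k)
      _ ≤ ∑ x, ∑ k, p x y k l :=
          Finset.single_le_sum (fun x _ => Finset.sum_nonneg fun k _ => hp x y k l)
            (Finset.mem_univ x)
  have hpXY_le_pX : ∀ x y, pXY x y ≤ pX x := fun x y => by
    rw [hpX]
    exact Finset.single_le_sum (fun y _ => hpXYnn x y) (Finset.mem_univ y)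
  have hpXY_le_pY : ∀ x y, pXY x y ≤ pY y := fun x y => by
    rw [hpY]
    exact Finset.single_le_sum (fun x _ => hpXYnn x y) (Finset.mem_univ x)
  -- alternative formulas for pK, pL
  have hKalt : ∀ k, pK k = ∑ x, pXK x k := by
    intro k
    simp only [hpK, hpKL, hpXK]
    rw [Finset.sum_comm]
    exact Finset.sum_congr rfl fun x _ => Finset.sum_comm
  have hLalt : ∀ l, pL l = ∑ y, pYL y l := by
    intro l
    simp only [hpL, hpKL, hpYL]
    calc ∑ k : K, ∑ x : X, ∑ y : Y, p x y k l
        = ∑ x : X, ∑ k : K, ∑ y : Y, p x y k l := Finset.sum_comm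
      _ = ∑ x : X, ∑ y : Y, ∑ k : K, p x y k l :=
          Finset.sum_congr rfl fun x _ => Finset.sum_comm
      _ = ∑ y : Y, ∑ x : X, ∑ k : K, p x y k l := Finset.sum_comm
  constructor
  · -- the inequality
    have main : ∀ k l, pKL k l * Real.log (pKL k l / (pK k * pL l))
        ≤ ∑ x, ∑ y, p x y k l * Real.log (pXY x y / (pX x * pY y)) := by
      intro k l
      have hA : pKL k l = ∑ q : X × Y, p q.1 q.2 k l := by
        rw [hpKL, Fintype.sum_prod_type]
      have hB : pK k * pL l = ∑ q : X × Y, pXK q.1 k * pYL q.2 l := by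
        rw [Fintype.sum_prod_type, hKalt, hLalt, Finset.sum_mul]
        exact Finset.sum_congr rfl fun x _ => by rw [Finset.mul_sum]
      have key : pKL k l * Real.log (pKL k l / (pK k * pL l))
          ≤ ∑ x, ∑ y, p x y k l * Real.log (p x y k l / (pXK x k * pYL y l)) := by
        have h := log_sum_ineq (Finset.univ : Finset (X × Y))
          (fun q => p q.1 q.2 k l) (fun q => pXK q.1 k * pYL q.2 l)
          (fun q _ => hp q.1 q.2 k l)
          (fun q _ => mul_nonneg (hpXKnn q.1 k) (hpYLnn q.2 l))
          (fun q _ hz => by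
            rcases mul_eq_zero.mp hz with h | h
            · exact le_antisymm (h ▸ hp_le_pXK q.1 q.2 k l) (hp q.1 q.2 k l)
            · exact le_antisymm (h ▸ hp_le_pYL q.1 q.2 k l) (hp q.1 q.2 k l))
        rw [← hA, ← hB] at h
        refine le_trans h (le_of_eq ?_)
        exact Fintype.sum_prod_type _
      refine le_trans key (le_of_eq ?_)
      refine Finset.sum_congr rfl fun x _ => Finset.sum_congr rfl fun y _ => ?_
      rcases lt_or_eq_of_le (hp x y k l) with hpos | hzero
      · have hXYpos : 0 < pXY x y := lt_of_lt_of_le hpos (hp_le_pXY x y k l)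
        have hXpos : 0 < pX x := lt_of_lt_of_le hXYpos (hpXY_le_pX x y)
        have hYpos : 0 < pY y := lt_of_lt_of_le hXYpos (hpXY_le_pY x y)
        have hXKpos : 0 < pXK x k := lt_of_lt_of_le hpos (hp_le_pXK x y k l)
        have hYLpos : 0 < pYL y l := lt_of_lt_of_le hpos (hp_le_pYL x y k l)
        have hf := hfact x y k l hXYpos
        have harg : p x y k l / (pXK x k * pYL y l) = pXY x y / (pX x * pY y) := by
          rw [div_eq_div_iff (by positivity) (by positivity)]
          field_simp [hXYpos.ne', hXpos.ne', hYpos.ne'] at hf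
          linear_combination hf
        rw [harg]
      · rw [← hzero]
        simp
    calc ∑ k, ∑ l, pKL k l * Real.log (pKL k l / (pK k * pL l))
        ≤ ∑ k, ∑ l, ∑ x, ∑ y, p x y k l * Real.log (pXY x y / (pX x * pY y)) :=
          Finset.sum_le_sum fun k _ => Finset.sum_le_sum fun l _ => main k l
      _ = ∑ k, ∑ x, ∑ l, ∑ y, p x y k l * Real.log (pXY x y / (pX x * pY y)) :=
          Finset.sum_congr rfl fun k _ => Finset.sum_comm
      _ = ∑ x, ∑ k, ∑ l, ∑ y, p x y k l * Real.log (pXY x y / (pX x * pY y)) :=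
          Finset.sum_comm
      _ = ∑ x, ∑ k, ∑ y, ∑ l, p x y k l * Real.log (pXY x y / (pX x * pY y)) :=
          Finset.sum_congr rfl fun x _ => Finset.sum_congr rfl fun k _ => Finset.sum_comm
      _ = ∑ x, ∑ y, ∑ k, ∑ l, p x y k l * Real.log (pXY x y / (pX x * pY y)) :=
          Finset.sum_congr rfl fun x _ => Finset.sum_comm
  · -- the equality
    refine Finset.sum_congr rfl fun x _ => Finset.sum_congr rfl fun y _ => ?_
    rw [hpXY, Finset.sum_mul]
    exact Finset.sum_congr rfl fun k _ => by rw [Finset.sum_mul]
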